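/- arXiv:2011.13426 — 10 statements merged into one kernel-verified Lean document; each statement's English description precedes it below -/
import Mathlib

section
/- Implementing multi-accuracy using no-access outcome indistinguishability: Let C be a collection of subsets of X and γ > 0 a real number with μ(S) := Σ_{i∈S} μ i ≥ γ for every S ∈ C. For each S ∈ C define the distinguisher A_S : X × Bool → Bool by A_S(i,b) = (b = true AND i ∈ S). Let α > 0 and let pt be a predictor. If for every S ∈ C the distinguishing advantage satisfies |Pr_{(i,o)~D(p*)}[A_S(i,o) = true] − Pr_{(i,o)~D(pt)}[A_S(i,o) = true]| ≤ α·γ, then pt is (C,α)-multi-accurate: for every S ∈ C, |E_{i~μ}[p* i | i ∈ S] − E_{i~μ}[pt i | i ∈ S]| ≤ α. -/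
open Finset

/-- Acceptance probability of a (no-access / sample-access on outcome only) distinguisher
`A : X → Bool → Bool` on the outcome distribution `D(p)`:
`Pr_{(i,o)~D(p)}[A(i,o)=true] = ∑ i, μ i * (p i * 1[A i true] + (1 - p i) * 1[A i false])`. -/
noncomputable def accept {X : Type*} [Fintype X] (μ p : X → ℝ) (A : X → Bool → Bool) : ℝ :=
  ∑ i, μ i * (p i * (if A i true then 1 else 0) + (1 - p i) * (if A i false then 1 else 0))

lemma accept_eq {X : Type*} [Fintype X] [DecidableEq X] (μ p : X → ℝ) (S : Finset X) :
    accept μ p (fun i b => b && decide (i ∈ S)) = ∑ i ∈ S, μ i * p i := by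
  unfold accept
  rw [← Finset.sum_filter_add_sum_filter_not Finset.univ (fun i => i ∈ S)]
  have h1 : ∀ i ∈ Finset.univ.filter (fun i => i ∈ S),
      μ i * (p i * (if (true && decide (i ∈ S)) = true then 1 else 0)
        + (1 - p i) * (if (false && decide (i ∈ S)) = true then 1 else 0)) = μ i * p i := by
    intro i hi
    simp at hi
    simp [hi]
  have h2 : ∀ i ∈ Finset.univ.filter (fun i => ¬ i ∈ S),
      μ i * (p i * (if (true && decide (i ∈ S)) = true then 1 else 0)
        + (1 - p i) * (if (false && decide (i ∈ S)) = true then 1 else 0)) = 0 := by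
    intro i hi
    simp at hi
    simp [hi]
  rw [Finset.sum_congr rfl h1, Finset.sum_congr rfl h2, Finset.sum_const_zero, add_zero]
  congr 1
  ext i; simp

/-- Implementing multi-accuracy using no-access outcome indistinguishability. -/
theorem stmt_0 {X : Type*} [Fintype X] [Nonempty X] [DecidableEq X]
    (μ : X → ℝ) (hμ0 : ∀ i, 0 ≤ μ i) (hμ1 : ∑ i, μ i = 1)
    (pstar : X → ℝ) (hps : ∀ i, 0 ≤ pstar i ∧ pstar i ≤ 1)
    (pt : X → ℝ) (hpt : ∀ i, 0 ≤ pt i ∧ pt i ≤ 1)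
    (C : Set (Finset X)) (γ : ℝ) (hγ : 0 < γ)
    (hC : ∀ S ∈ C, γ ≤ ∑ i ∈ S, μ i)
    (α : ℝ) (hα : 0 < α)
    (hOI : ∀ S ∈ C,
      |accept μ pstar (fun i b => b && decide (i ∈ S))
        - accept μ pt (fun i b => b && decide (i ∈ S))| ≤ α * γ) :
    ∀ S ∈ C,
      |(∑ i ∈ S, μ i * pstar i) / (∑ i ∈ S, μ i)
        - (∑ i ∈ S, μ i * pt i) / (∑ i ∈ S, μ i)| ≤ α := by
  intro S hS
  have hμS : γ ≤ ∑ i ∈ S, μ i := hC S hS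
  have hμSpos : 0 < ∑ i ∈ S, μ i := lt_of_lt_of_le hγ hμS
  have hOI' := hOI S hS
  rw [accept_eq, accept_eq] at hOI'
  rw [div_sub_div_same, abs_div, abs_of_pos hμSpos, div_le_iff₀ hμSpos]
  calc |(∑ i ∈ S, μ i * pstar i) - ∑ i ∈ S, μ i * pt i| ≤ α * γ := hOI'
    _ ≤ α * ∑ i ∈ S, μ i := by nlinarith
end

section
/- Implementing no-access outcome indistinguishability using multi-accuracy: Let 𝒜 be a family of deterministic distinguishers A : X × Bool → Bool, and for each A ∈ 𝒜 and b ∈ Bool define the subpopulation S_{(A,b)} = {i ∈ X : A(i,b) = true}. Let ε > 0 and let pt be a predictor. If for every A ∈ 𝒜 and every b ∈ Bool with μ(S_{(A,b)}) > 0 it holds that |E_{i~μ}[p* i | i ∈ S_{(A,b)}] − E_{i~μ}[pt i | i ∈ S_{(A,b)}]| ≤ ε/2, then for every A ∈ 𝒜, |Pr_{(i,o)~D(p*)}[A(i,o) = true] − Pr_{(i,o)~D(pt)}[A(i,o) = true]| ≤ ε. -/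
open Finset

/-- The subpopulation `S_{(A,b)} = {i ∈ X : A(i,b) = true}` associated to a distinguisher. -/
def distSubpop {X : Type*} [Fintype X] (A : X → Bool → Bool) (b : Bool) : Finset X :=
  Finset.univ.filter (fun i => A i b = true)

/-- Implementing no-access outcome indistinguishability using multi-accuracy. -/
theorem stmt_1 {X : Type*} [Fintype X] [Nonempty X]
    (μ : X → ℝ) (hμ0 : ∀ i, 0 ≤ μ i) (hμ1 : ∑ i, μ i = 1)
    (pstar : X → ℝ) (hps : ∀ i, 0 ≤ pstar i ∧ pstar i ≤ 1)
    (pt : X → ℝ) (hpt : ∀ i, 0 ≤ pt i ∧ pt i ≤ 1)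
    (𝒜 : Set (X → Bool → Bool)) (ε : ℝ) (hε : 0 < ε)
    (hMA : ∀ A ∈ 𝒜, ∀ b : Bool,
      0 < ∑ i ∈ distSubpop A b, μ i →
      |(∑ i ∈ distSubpop A b, μ i * pstar i) / (∑ i ∈ distSubpop A b, μ i)
        - (∑ i ∈ distSubpop A b, μ i * pt i) / (∑ i ∈ distSubpop A b, μ i)| ≤ ε / 2) :
    ∀ A ∈ 𝒜, |accept μ pstar A - accept μ pt A| ≤ ε := by
  intro A hA
  -- key bound for each b
  have key : ∀ b : Bool,
      |(∑ i ∈ distSubpop A b, μ i * pstar i) - (∑ i ∈ distSubpop A b, μ i * pt i)| ≤ ε / 2 := by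
    intro b
    set S := distSubpop A b with hS
    rcases lt_or_ge 0 (∑ i ∈ S, μ i) with hpos | hnonpos
    · have h := hMA A hA b hpos
      rw [div_sub_div_same, abs_div, abs_of_pos hpos, div_le_iff₀ hpos] at h
      have hle1 : (∑ i ∈ S, μ i) ≤ 1 := by
        rw [← hμ1]
        exact Finset.sum_le_sum_of_subset_of_nonneg (Finset.subset_univ S)
          (fun i _ _ => hμ0 i)
      calc |(∑ i ∈ S, μ i * pstar i) - ∑ i ∈ S, μ i * pt i|
          ≤ ε / 2 * ∑ i ∈ S, μ i := h
        _ ≤ ε / 2 * 1 := by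
            exact mul_le_mul_of_nonneg_left hle1 (by positivity)
        _ = ε / 2 := mul_one _
    · have hzero : ∀ i ∈ S, μ i = 0 := by
        intro i hi
        have hsum0 : (∑ i ∈ S, μ i) = 0 :=
          le_antisymm hnonpos (Finset.sum_nonneg fun i _ => hμ0 i)
        exact (Finset.sum_eq_zero_iff_of_nonneg (fun i _ => hμ0 i)).mp hsum0 i hi
      have h1 : (∑ i ∈ S, μ i * pstar i) = 0 :=
        Finset.sum_eq_zero fun i hi => by rw [hzero i hi, zero_mul]
      have h2 : (∑ i ∈ S, μ i * pt i) = 0 :=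
        Finset.sum_eq_zero fun i hi => by rw [hzero i hi, zero_mul]
      rw [h1, h2, sub_zero, abs_zero]
      positivity
  -- rewrite accept difference
  have hdiff : accept μ pstar A - accept μ pt A =
      ((∑ i ∈ distSubpop A true, μ i * pstar i) - (∑ i ∈ distSubpop A true, μ i * pt i))
      - ((∑ i ∈ distSubpop A false, μ i * pstar i) - (∑ i ∈ distSubpop A false, μ i * pt i)) := by
    unfold accept distSubpop
    rw [Finset.sum_filter, Finset.sum_filter, Finset.sum_filter, Finset.sum_filter,
      ← Finset.sum_sub_distrib]
    simp only [← Finset.sum_sub_distrib, ← Finset.sum_add_distrib]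
    apply Finset.sum_congr rfl
    intro i _
    by_cases h1 : A i true = true <;> by_cases h2 : A i false = true <;> simp [h1, h2] <;> ring
  rw [hdiff]
  calc |_ - _| ≤ |(∑ i ∈ distSubpop A true, μ i * pstar i) - (∑ i ∈ distSubpop A true, μ i * pt i)|
      + |(∑ i ∈ distSubpop A false, μ i * pstar i) - (∑ i ∈ distSubpop A false, μ i * pt i)| :=
        abs_sub _ _
    _ ≤ ε / 2 + ε / 2 := add_le_add (key true) (key false)
    _ = ε := by ring
end

section
/- Implementing multi-calibration using sample-access outcome indistinguishability: Let m ≥ 1, let G_m = {(2j−1)/(2m) : j = 1,…,m}, and let p̄ : X → G_m be any predictor taking values in the grid G_m. Let C be a collection of subsets of X and γ > 0 with μ(S) ≥ γ for every S ∈ C, and let α > 0. For u ∈ G_m and S ∈ C define the distinguisher A_{u,S} : X × Bool × ℝ → Bool by A_{u,S}(i,b,v) = (i ∈ S AND b = true AND |u − v| ≤ 1/(2m)). If for every u ∈ G_m and S ∈ C, |Pr_{(i,o)~D(p*)}[A_{u,S}(i, o, p̄ i) = true] − Pr_{(i,o)~D(p̄)}[A_{u,S}(i, o, p̄ i) = true]|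 ≤ α²·γ/m, then p̄ is (C,α)-multi-calibrated: for every S ∈ C and every u ∈ supp_S(p̄) with Pr_{i~μ}[p̄ i = u | i ∈ S] ≥ α/|supp_S(p̄)|, it holds that |E_{i~μ}[p* i | p̄ i = u AND i ∈ S] − u| ≤ α. -/
open Finset

/-- The grid `G_m = {(2j-1)/(2m) : j = 1,…,m}`. -/
noncomputable def grid (m : ℕ) : Finset ℝ :=
  (Finset.Icc 1 m).image (fun j : ℕ => (2 * (j : ℝ) - 1) / (2 * (m : ℝ)))

/-- Acceptance probability of a sample-access distinguisher `A : X → Bool → ℝ → Bool`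
which is also shown the prediction `pbar i`, on the outcome distribution `D(p)`. -/
noncomputable def acceptP {X : Type*} [Fintype X] (μ p pbar : X → ℝ)
    (A : X → Bool → ℝ → Bool) : ℝ :=
  ∑ i, μ i * (p i * (if A i true (pbar i) then 1 else 0)
    + (1 - p i) * (if A i false (pbar i) then 1 else 0))

/-- The support of `pbar` on `S`: the values `v` with `Pr_{i~μ}[pbar i = v ∧ i ∈ S] > 0`. -/
noncomputable def suppOn {X : Type*} [Fintype X] (μ pbar : X → ℝ) (S : Finset X) : Finset ℝ :=
  (S.image pbar).filter (fun v => 0 < ∑ i ∈ S.filter (fun i => pbar i = v), μ i)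


lemma grid_sep {m : ℕ} (hm : 1 ≤ m) {u v : ℝ} (hu : u ∈ grid m) (hv : v ∈ grid m) :
    |u - v| ≤ 1 / (2 * m) ↔ u = v := by
  have hm' : (0:ℝ) < m := by exact_mod_cast Nat.pos_of_ne_zero (by omega)
  simp only [grid, Finset.mem_image, Finset.mem_Icc] at hu hv
  obtain ⟨j, hj, rfl⟩ := hu
  obtain ⟨k, hk, rfl⟩ := hv
  have heq : (2*(j:ℝ)-1)/(2*m) - (2*(k:ℝ)-1)/(2*m) = ((j:ℝ)-k)/m := by
    field_simp; ring
  constructor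
  · intro h
    by_contra hne
    have hjk : j ≠ k := by
      intro e; exact hne (by rw [e])
    have h1 : (1:ℝ) ≤ |(j:ℝ) - k| := by
      have : (1:ℤ) ≤ |(j:ℤ) - k| := Int.one_le_abs (sub_ne_zero.mpr (by exact_mod_cast hjk))
      calc (1:ℝ) = ((1:ℤ):ℝ) := by norm_num
        _ ≤ |((j:ℤ):ℝ) - ((k:ℤ):ℝ)| := by
            rw [← Int.cast_sub, ← Int.cast_abs]; exact_mod_cast ‹(1:ℤ) ≤ |(j:ℤ) - k|›
        _ = |(j:ℝ) - k| := by push_cast; ring_nf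
    rw [heq, abs_div, abs_of_pos hm'] at h
    have : |(j:ℝ) - k| ≤ 1/2 := by
      rw [div_le_div_iff₀ hm' (by positivity)] at h
      nlinarith
    linarith
  · intro h
    rw [h, sub_self, abs_zero]
    positivity

lemma acceptP_eq {X : Type*} [Fintype X] [DecidableEq X] (μ p pbar : X → ℝ) (S : Finset X)
    (m : ℕ) (hm : 1 ≤ m) (hpbar : ∀ i, pbar i ∈ grid m) (u : ℝ) (hu : u ∈ grid m) :
    acceptP μ p pbar (fun i b v => decide (i ∈ S) && b && decide (|u - v| ≤ 1 / (2 * m)))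
      = ∑ i ∈ S.filter (fun i => pbar i = u), μ i * p i := by
  have hfil : S.filter (fun i => pbar i = u)
      = Finset.univ.filter (fun i => i ∈ S ∧ pbar i = u) := by
    ext i; simp
  rw [hfil, Finset.sum_filter]
  unfold acceptP
  apply Finset.sum_congr rfl
  intro i _
  have hsep : |u - pbar i| ≤ 1 / (2 * m) ↔ pbar i = u :=
    (grid_sep hm hu (hpbar i)).trans eq_comm
  by_cases hiS : i ∈ S <;> by_cases hpu : pbar i = u
  · have hle : |u - pbar i| ≤ 1 / (2 * (m:ℝ)) := hsep.mpr hpu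
    simp [hiS, hpu, hle]
    try ring
  · have hnle : ¬ (|u - pbar i| ≤ 1 / (2 * (m:ℝ))) := fun h => hpu (hsep.mp h)
    have hne : ¬ (|u - pbar i| ≤ ((m:ℝ))⁻¹ * 2⁻¹) := by
      rw [show ((m:ℝ))⁻¹ * 2⁻¹ = 1/(2*(m:ℝ)) by ring]
      exact hnle
    simp [hiS, hpu, hnle, hne]
  · simp [hiS, hpu]
  · simp [hiS, hpu]

/-- Implementing multi-calibration using sample-access outcome indistinguishability. -/
theorem stmt_2 {X : Type*} [Fintype X] [Nonempty X] [DecidableEq X]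
    (μ : X → ℝ) (hμ0 : ∀ i, 0 ≤ μ i) (hμ1 : ∑ i, μ i = 1)
    (pstar : X → ℝ) (hps : ∀ i, 0 ≤ pstar i ∧ pstar i ≤ 1)
    (m : ℕ) (hm : 1 ≤ m)
    (pbar : X → ℝ) (hpbar : ∀ i, pbar i ∈ grid m)
    (C : Set (Finset X)) (γ : ℝ) (hγ : 0 < γ)
    (hC : ∀ S ∈ C, γ ≤ ∑ i ∈ S, μ i)
    (α : ℝ) (hα : 0 < α)
    (hOI : ∀ u ∈ grid m, ∀ S ∈ C,
      |acceptP μ pstar pbar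
          (fun i b v => decide (i ∈ S) && b && decide (|u - v| ≤ 1 / (2 * m)))
        - acceptP μ pbar pbar
          (fun i b v => decide (i ∈ S) && b && decide (|u - v| ≤ 1 / (2 * m)))|
        ≤ α ^ 2 * γ / m) :
    ∀ S ∈ C, ∀ u ∈ suppOn μ pbar S,
      α / (suppOn μ pbar S).card ≤
        (∑ i ∈ S.filter (fun i => pbar i = u), μ i) / (∑ i ∈ S, μ i) →
      |(∑ i ∈ S.filter (fun i => pbar i = u), μ i * pstar i)
          / (∑ i ∈ S.filter (fun i => pbar i = u), μ i) - u| ≤ α := by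

  intro S hS u hu hrat
  have huG : u ∈ grid m := by
    have := hu
    simp only [suppOn, Finset.mem_filter, Finset.mem_image] at this
    obtain ⟨⟨i, hi, rfl⟩, _⟩ := this
    exact hpbar i
  have hw : 0 < ∑ i ∈ S.filter (fun i => pbar i = u), μ i := by
    have := hu
    simp only [suppOn, Finset.mem_filter] at this
    exact this.2
  set w := ∑ i ∈ S.filter (fun i => pbar i = u), μ i with hwdef
  set A := ∑ i ∈ S.filter (fun i => pbar i = u), μ i * pstar i with hAdef
  have hm' : (0:ℝ) < m := by exact_mod_cast Nat.pos_of_ne_zero (by omega)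
  -- OI gives |A - u * w|  ≤ α^2 γ / m
  have hOI' := hOI u huG S hS
  rw [acceptP_eq μ pstar pbar S m hm hpbar u huG,
      acceptP_eq μ pbar pbar S m hm hpbar u huG] at hOI'
  have hsum2 : ∑ i ∈ S.filter (fun i => pbar i = u), μ i * pbar i = u * w := by
    rw [hwdef, Finset.mul_sum]
    apply Finset.sum_congr rfl
    intro i hi
    simp only [Finset.mem_filter] at hi
    rw [hi.2]; ring
  rw [hsum2] at hOI'
  -- bounds on card and μ S
  have hμS : γ ≤ ∑ i ∈ S, μ i := hC S hS
  have hcard1 : 1 ≤ (suppOn μ pbar S).card := Finset.card_pos.mpr ⟨u, hu⟩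
  have hcardm : (suppOn μ pbar S).card ≤ m := by
    calc (suppOn μ pbar S).card ≤ (grid m).card := by
          apply Finset.card_le_card
          intro v hv
          simp only [suppOn, Finset.mem_filter, Finset.mem_image] at hv
          obtain ⟨⟨i, hi, rfl⟩, _⟩ := hv
          exact hpbar i
      _ ≤ (Finset.Icc 1 m).card := Finset.card_image_le
      _ = m := by simp
  have hcardR : (1:ℝ) ≤ ((suppOn μ pbar S).card : ℝ) := by exact_mod_cast hcard1
  have hcardRm : ((suppOn μ pbar S).card : ℝ) ≤ m := by exact_mod_cast hcardm
  -- w ≥ α γ / m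
  have hcross : α * (∑ i ∈ S, μ i) ≤ w * ((suppOn μ pbar S).card : ℝ) := by
    rw [div_le_div_iff₀ (by linarith) (by linarith)] at hrat
    linarith
  have hwlb : α * γ ≤ w * m := by
    nlinarith
  -- final
  have hkey : |A - u * w| ≤ α * w := by
    calc |A - u * w| ≤ α ^ 2 * γ / m := hOI'
      _ ≤ α * w := by
          rw [div_le_iff₀ hm'] at *
          nlinarith
  have : A / w - u = (A - u * w) / w := by
    field_simp
  rw [this, abs_div, abs_of_pos hw, div_le_iff₀ hw]
  exact hkey
end

section
/- The ℓ₁-test forces statistical closeness under prediction indistinguishability: Suppose the nature predictor decomposes as p* = f + δ pointwise, where f : X → {0,1} is Boolean-valued and δ : X → ℝ satisfies Σ_i μ i · |δ i| ≤ τ for some τ ≥ 0. Define, for any predictor q : X → [0,1], the acceptance probability of the randomized distinguisher A_{ℓ1} when shown nature's outcomes together with predictions q: Acc(q) = Σ_i μ i · (p* i · (1 − |1 − q i|) + (1 − p* i) · (1 − |q i|)). Let ε ≥ 0. If |Acc(p*) − Acc(pt)| ≤ ε for a predictor pt, then Σ_i μ i · |p* i − pt i| ≤ 4τ + ε. -/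
open Finset

/-- Acceptance probability of the randomized distinguisher `A_{ℓ1}` when shown nature's
outcomes (drawn from `D(p*)`) together with the predictions `q`:
`Acc(q) = ∑ i, μ i * (p* i * (1 - |1 - q i|) + (1 - p* i) * (1 - |q i|))`. -/
noncomputable def accL1 {X : Type*} [Fintype X] (μ pstar q : X → ℝ) : ℝ :=
  ∑ i, μ i * (pstar i * (1 - |1 - q i|) + (1 - pstar i) * (1 - |q i|))

lemma key_pt (a b d : ℝ) (ha : 0 ≤ a) (ha1 : a ≤ 1) (hb : 0 ≤ b) (hb1 : b ≤ 1)
    (hd : d = a ∨ d = a - 1) :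
    |a - b| ≤ (2 * a - 1) * (a - b) + 4 * |d| := by
  rcases hd with hd | hd
  · rw [hd, abs_of_nonneg ha]
    rcases abs_cases (a - b) with ⟨h1, h2⟩ | ⟨h1, h2⟩ <;> rw [h1] <;> nlinarith
  · rw [hd, abs_of_nonpos (by linarith : a - 1 ≤ 0)]
    rcases abs_cases (a - b) with ⟨h1, h2⟩ | ⟨h1, h2⟩ <;> rw [h1] <;> nlinarith

/-- The ℓ₁-test forces statistical closeness under prediction indistinguishability. -/
theorem stmt_4 {X : Type*} [Fintype X] [Nonempty X]
    (μ : X → ℝ) (hμ0 : ∀ i, 0 ≤ μ i) (hμ1 : ∑ i, μ i = 1)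
    (pstar : X → ℝ) (hps : ∀ i, 0 ≤ pstar i ∧ pstar i ≤ 1)
    (f δ : X → ℝ) (hf : ∀ i, f i = 0 ∨ f i = 1)
    (hdecomp : ∀ i, pstar i = f i + δ i)
    (τ : ℝ) (hτ : 0 ≤ τ) (hδ : ∑ i, μ i * |δ i| ≤ τ)
    (pt : X → ℝ) (hpt : ∀ i, 0 ≤ pt i ∧ pt i ≤ 1)
    (ε : ℝ) (hε : 0 ≤ ε)
    (hPI : |accL1 μ pstar pstar - accL1 μ pstar pt| ≤ ε) :
    ∑ i, μ i * |pstar i - pt i| ≤ 4 * τ + ε := by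
  have hdiff : accL1 μ pstar pstar - accL1 μ pstar pt
      = ∑ i, μ i * ((2 * pstar i - 1) * (pstar i - pt i)) := by
    unfold accL1
    rw [← Finset.sum_sub_distrib]
    refine Finset.sum_congr rfl fun i _ => ?_
    obtain ⟨h1, h2⟩ := hps i
    obtain ⟨h3, h4⟩ := hpt i
    rw [abs_of_nonneg (by linarith : (0:ℝ) ≤ 1 - pstar i), abs_of_nonneg h1,
      abs_of_nonneg (by linarith : (0:ℝ) ≤ 1 - pt i), abs_of_nonneg h3]
    ring
  have hkey : ∀ i, μ i * |pstar i - pt i|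
      ≤ μ i * ((2 * pstar i - 1) * (pstar i - pt i)) + 4 * (μ i * |δ i|) := by
    intro i
    have h := key_pt (pstar i) (pt i) (δ i) (hps i).1 (hps i).2 (hpt i).1 (hpt i).2 ?_
    · nlinarith [mul_le_mul_of_nonneg_left h (hμ0 i), abs_nonneg (δ i), hμ0 i]
    · rcases hf i with h0 | h1
      · left; have := hdecomp i; linarith
      · right; have := hdecomp i; linarith
  calc ∑ i, μ i * |pstar i - pt i|
      ≤ ∑ i, (μ i * ((2 * pstar i - 1) * (pstar i - pt i)) + 4 * (μ i * |δ i|)) :=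
        Finset.sum_le_sum fun i _ => hkey i
    _ = (accL1 μ pstar pstar - accL1 μ pstar pt) + 4 * ∑ i, μ i * |δ i| := by
        rw [hdiff, Finset.sum_add_distrib, ← Finset.mul_sum]
    _ ≤ ε + 4 * τ := by
        have := abs_le.mp hPI
        have h4 : 4 * ∑ i, μ i * |δ i| ≤ 4 * τ := by linarith
        linarith
    _ ≤ 4 * τ + ε := by linarith
end

section
/- For valid-model distinguishers, outcome indistinguishability implies prediction indistinguishability: Let m ≥ 1, ε ≥ 0, and let A be an m-sample distinguisher (a Boolean function of m triples in X × Bool × ℝ) satisfying the valid-model property: there exists q_A ∈ ℝ such that for every predictor p, |Acc(A; p, p) − q_A| ≤ ε. Let pt be a predictor. If |Acc(A; p*, pt) − Acc(A; pt, pt)| ≤ ε (the outcome-indistinguishability condition), then |Acc(A; p*, pt) − Acc(A; p*, p*)| ≤ 3ε (the prediction-indistinguishability condition). -/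
open Finset

/-- `Acc(A; p, q)`: the probability that the `m`-sample distinguisher `A` accepts when
given `m` independent samples `(i_j, o_j)` from `D(p)`, each displayed together with the
prediction `q i_j`. -/
noncomputable def acceptM {X : Type*} [Fintype X] (μ : X → ℝ) (m : ℕ)
    (A : (Fin m → X × Bool × ℝ) → Bool) (p q : X → ℝ) : ℝ :=
  ∑ z : Fin m → X × Bool,
    (∏ j, μ (z j).1 * (if (z j).2 then p (z j).1 else 1 - p (z j).1)) *
      (if A (fun j => ((z j).1, (z j).2, q (z j).1)) then 1 else 0)

/-- For valid-model distinguishers, outcome indistinguishability implies prediction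
indistinguishability. -/
theorem stmt_5 {X : Type*} [Fintype X] [Nonempty X]
    (μ : X → ℝ) (hμ0 : ∀ i, 0 ≤ μ i) (hμ1 : ∑ i, μ i = 1)
    (pstar : X → ℝ) (hps : ∀ i, 0 ≤ pstar i ∧ pstar i ≤ 1)
    (m : ℕ) (hm : 1 ≤ m) (ε : ℝ) (hε : 0 ≤ ε)
    (A : (Fin m → X × Bool × ℝ) → Bool) (qA : ℝ)
    (hvm : ∀ p : X → ℝ, (∀ i, 0 ≤ p i ∧ p i ≤ 1) → |acceptM μ m A p p - qA| ≤ ε)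
    (pt : X → ℝ) (hpt : ∀ i, 0 ≤ pt i ∧ pt i ≤ 1)
    (hOI : |acceptM μ m A pstar pt - acceptM μ m A pt pt| ≤ ε) :
    |acceptM μ m A pstar pt - acceptM μ m A pstar pstar| ≤ 3 * ε := by
  have h1 := hvm pt hpt
  have h2 := hvm pstar hps
  have := abs_sub_abs_le_abs_sub (acceptM μ m A pt pt - qA) (acceptM μ m A pstar pstar - qA)
  calc |acceptM μ m A pstar pt - acceptM μ m A pstar pstar|
      ≤ |acceptM μ m A pstar pt - acceptM μ m A pt pt| +
        |acceptM μ m A pt pt - qA| + |qA - acceptM μ m A pstar pstar| :=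
        (abs_sub_le _ _ _).trans (by gcongr; exact abs_sub_le _ _ _)
    _ ≤ ε + ε + ε := by
        gcongr
        rw [abs_sub_comm]; exact h2
    _ = 3 * ε := by ring
end

section
/- For valid-model distinguishers, prediction indistinguishability implies outcome indistinguishability: Let m ≥ 1, ε ≥ 0, and let A be an m-sample distinguisher (a Boolean function of m triples in X × Bool × ℝ) satisfying the valid-model property: there exists q_A ∈ ℝ such that for every predictor p, |Acc(A; p, p) − q_A| ≤ ε. Let pt be a predictor. If |Acc(A; p*, pt) − Acc(A; p*, p*)| ≤ ε (the prediction-indistinguishability condition), then |Acc(A; p*, pt) − Acc(A; pt, pt)| ≤ 3ε (the outcome-indistinguishability condition). -/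
open Finset

/-- For valid-model distinguishers, prediction indistinguishability implies outcome
indistinguishability. -/
theorem stmt_6 {X : Type*} [Fintype X] [Nonempty X]
    (μ : X → ℝ) (hμ0 : ∀ i, 0 ≤ μ i) (hμ1 : ∑ i, μ i = 1)
    (pstar : X → ℝ) (hps : ∀ i, 0 ≤ pstar i ∧ pstar i ≤ 1)
    (m : ℕ) (hm : 1 ≤ m) (ε : ℝ) (hε : 0 ≤ ε)
    (A : (Fin m → X × Bool × ℝ) → Bool) (qA : ℝ)
    (hvm : ∀ p : X → ℝ, (∀ i, 0 ≤ p i ∧ p i ≤ 1) → |acceptM μ m A p p - qA| ≤ ε)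
    (pt : X → ℝ) (hpt : ∀ i, 0 ≤ pt i ∧ pt i ≤ 1)
    (hPI : |acceptM μ m A pstar pt - acceptM μ m A pstar pstar| ≤ ε) :
    |acceptM μ m A pstar pt - acceptM μ m A pt pt| ≤ 3 * ε := by
  have h1 := hvm pstar hps
  have h2 := hvm pt hpt
  calc |acceptM μ m A pstar pt - acceptM μ m A pt pt|
      = |(acceptM μ m A pstar pt - acceptM μ m A pstar pstar) +
        (acceptM μ m A pstar pstar - qA) + (qA - acceptM μ m A pt pt)| := by ring_nf
    _ ≤ |acceptM μ m A pstar pt - acceptM μ m A pstar pstar| +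
        |acceptM μ m A pstar pstar - qA| + |qA - acceptM μ m A pt pt| := abs_add_three _ _ _
    _ ≤ ε + ε + ε := by
        refine add_le_add (add_le_add hPI h1) ?_
        rw [abs_sub_comm]; exact h2
    _ = 3 * ε := by ring
end

section
/- Potential drop per update step: Let p be a predictor and δ : X → ℝ with |δ i| ≤ 1 for all i. Set Δ = Σ_i μ i · (p* i − p i) · δ i, and define the updated predictor p' by p' i = clamp_{[0,1]}(p i + (Δ/2) · δ i), where clamp_{[0,1]}(y) = min(1, max(0, y)). Then the squared-error potential drops by at least (3/4)·Δ²: Σ_i μ i · (p* i − p i)² − Σ_i μ i · (p* i − p' i)² ≥ (3/4)·Δ². -/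
open Finset

lemma clamp_sq_le {t y : ℝ} (h0 : 0 ≤ t) (h1 : t ≤ 1) :
    (t - min 1 (max 0 y)) ^ 2 ≤ (t - y) ^ 2 := by
  rcases le_total y 0 with hy | hy
  · rw [max_eq_left hy, min_eq_right zero_le_one]
    nlinarith
  · rw [max_eq_right hy]
    rcases le_total 1 y with hy1 | hy1
    · rw [min_eq_left hy1]; nlinarith
    · rw [min_eq_right hy1]

/-- Potential drop per update step of the boosting construction. -/
theorem stmt_11 {X : Type*} [Fintype X] [Nonempty X]
    (μ : X → ℝ) (hμ0 : ∀ i, 0 ≤ μ i) (hμ1 : ∑ i, μ i = 1)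
    (pstar : X → ℝ) (hps : ∀ i, 0 ≤ pstar i ∧ pstar i ≤ 1)
    (p : X → ℝ) (hp : ∀ i, 0 ≤ p i ∧ p i ≤ 1)
    (δ : X → ℝ) (hδ : ∀ i, |δ i| ≤ 1)
    (Δ : ℝ) (hΔ : Δ = ∑ i, μ i * (pstar i - p i) * δ i)
    (p' : X → ℝ) (hp' : ∀ i, p' i = min 1 (max 0 (p i + Δ / 2 * δ i))) :
    3 / 4 * Δ ^ 2 ≤
      (∑ i, μ i * (pstar i - p i) ^ 2) - ∑ i, μ i * (pstar i - p' i) ^ 2 := by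
  have hpt : ∑ i, μ i * (pstar i - p' i) ^ 2 ≤
      ∑ i, μ i * (pstar i - (p i + Δ / 2 * δ i)) ^ 2 := by
    apply Finset.sum_le_sum
    intro i _
    rw [hp' i]
    exact mul_le_mul_of_nonneg_left (clamp_sq_le (hps i).1 (hps i).2) (hμ0 i)
  have hS : ∑ i, μ i * δ i ^ 2 ≤ 1 := by
    rw [← hμ1]
    apply Finset.sum_le_sum
    intro i _
    have h := abs_le.mp (hδ i)
    have hd2 : δ i ^ 2 ≤ 1 := by nlinarith [h.1, h.2]
    calc μ i * δ i ^ 2 ≤ μ i * 1 := mul_le_mul_of_nonneg_left hd2 (hμ0 i)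
      _ = μ i := mul_one _
  have hexp : (∑ i, μ i * (pstar i - p i) ^ 2)
      - ∑ i, μ i * (pstar i - (p i + Δ / 2 * δ i)) ^ 2
      = Δ ^ 2 - Δ ^ 2 / 4 * ∑ i, μ i * δ i ^ 2 := by
    rw [← Finset.sum_sub_distrib]
    have : ∀ i : X, μ i * (pstar i - p i) ^ 2
        - μ i * (pstar i - (p i + Δ / 2 * δ i)) ^ 2
        = Δ * (μ i * (pstar i - p i) * δ i) - Δ ^ 2 / 4 * (μ i * δ i ^ 2) := by
      intro i; ring
    simp_rw [this]
    rw [Finset.sum_sub_distrib, ← Finset.mul_sum, ← Finset.mul_sum, ← hΔ]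
    ring
  nlinarith [sq_nonneg Δ]
end

section
/- Size recurrence for the code-access construction with sublinear distinguishers: Let C ≥ 1 and b ≥ 0 be real numbers and let δ ∈ [0,1) be a real number. Then there exists a real number B ≥ 1 (depending only on C, b, δ) such that every sequence (s_t)_{t≥1} of nonnegative real numbers satisfying s_1 ≤ C and s_{t+1} ≤ C + s_t + b·s_t^δ for all t ≥ 1 satisfies s_t ≤ B·C·t^{1/(1−δ)} for all t ≥ 1. -/
/-- Size recurrence for the code-access construction with sublinear distinguishers.
Here `x ^ δ` and `(t : ℝ) ^ (1 / (1 - δ))` are real powers (`rpow`). -/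
theorem stmt_15 (C b δ : ℝ) (hC : 1 ≤ C) (hb : 0 ≤ b) (hδ0 : 0 ≤ δ) (hδ1 : δ < 1) :
    ∃ B : ℝ, 1 ≤ B ∧
      ∀ f : ℕ → ℝ, (∀ t, 0 ≤ f t) → f 1 ≤ C →
        (∀ t : ℕ, 1 ≤ t → f (t + 1) ≤ C + f t + b * f t ^ δ) →
        ∀ t : ℕ, 1 ≤ t → f t ≤ B * C * (t : ℝ) ^ (1 / (1 - δ)) := by
  have h1δ : (0:ℝ) < 1 - δ := by linarith
  set α : ℝ := 1 / (1 - δ) with hα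
  have hαpos : 0 < α := by positivity
  have hα1 : 1 ≤ α := by
    rw [hα, le_div_iff₀ h1δ]; linarith
  have hαδ : α - 1 = α * δ := by
    rw [hα]; field_simp; ring
  refine ⟨(1 + b) ^ α, Real.one_le_rpow (by linarith) hαpos.le, ?_⟩
  set B : ℝ := (1 + b) ^ α with hB
  have hBpos : 0 < B := Real.rpow_pos_of_pos (by linarith) _
  have hB1 : 1 ≤ B := Real.one_le_rpow (by linarith) hαpos.le
  have hBδ1 : 1 ≤ B ^ δ := Real.one_le_rpow hB1 hδ0
  have hBδpos : 0 < B ^ δ := lt_of_lt_of_le one_pos hBδ1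
  have hBsplit : B = B ^ δ * (1 + b) := by
    have h1 : B ^ (1 - δ) = 1 + b := by
      rw [hB, ← Real.rpow_mul (by linarith : (0:ℝ) ≤ 1 + b), hα,
        div_mul_cancel₀ 1 h1δ.ne', Real.rpow_one]
    calc B = B ^ (δ + (1 - δ)) := by norm_num
    _ = B ^ δ * B ^ (1 - δ) := Real.rpow_add hBpos _ _
    _ = B ^ δ * (1 + b) := by rw [h1]
  have hCpos : 0 < C := by linarith
  intro f hf0 hf1 hrec
  intro t ht
  induction t with
  | zero => omega
  | succ n ih =>
    rcases Nat.eq_or_lt_of_le ht with h | h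
    · -- base case n + 1 = 1
      have hn : n = 0 := by omega
      subst hn
      have hcast : ((0 + 1 : ℕ) : ℝ) = 1 := by norm_num
      rw [hcast, Real.one_rpow, mul_one]
      calc f (0 + 1) ≤ C := hf1
      _ ≤ B * C := le_mul_of_one_le_left hCpos.le hB1
    · have hn : 1 ≤ n := by omega
      have ihn := ih hn
      have hnR : (1:ℝ) ≤ (n:ℝ) := by exact_mod_cast hn
      have hnpos : (0:ℝ) < n := by linarith
      have htα1 : 1 ≤ (n:ℝ) ^ α := Real.one_le_rpow hnR hαpos.le
      have htαδ1 : 1 ≤ (n:ℝ) ^ (α * δ) := Real.one_le_rpow hnR (by positivity)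
      have htαδ0 : 0 ≤ (n:ℝ) ^ (α * δ) := by linarith
      -- Bernoulli: (n+1)^α ≥ n^α + α * n^(α-1)
      have hbern : (n:ℝ) ^ α + α * (n:ℝ) ^ (α * δ) ≤ ((n:ℝ) + 1) ^ α := by
        have hs : (-1:ℝ) ≤ 1 / (n:ℝ) := by
          have : (0:ℝ) ≤ 1 / (n:ℝ) := by positivity
          linarith
        have h := one_add_mul_self_le_rpow_one_add hs hα1
        have hsplit : ((n:ℝ) + 1) ^ α = (n:ℝ) ^ α * (1 + 1/(n:ℝ)) ^ α := by
          rw [← Real.mul_rpow hnpos.le (by positivity)]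
          congr 1
          field_simp
        rw [hsplit]
        have h2 : (n:ℝ) ^ α * (1 + α * (1/(n:ℝ))) ≤ (n:ℝ) ^ α * (1 + 1/(n:ℝ)) ^ α :=
          mul_le_mul_of_nonneg_left h (by positivity)
        refine le_trans ?_ h2
        have h3 : (n:ℝ) ^ (α * δ) = (n:ℝ) ^ α * (1/(n:ℝ)) := by
          rw [← hαδ, Real.rpow_sub hnpos, Real.rpow_one]
          field_simp
        rw [h3]
        exact le_of_eq (by ring)
      -- bound f (n+1)
      have hfδ : f n ^ δ ≤ B ^ δ * C * (n:ℝ) ^ (α * δ) := by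
        have h1 : f n ^ δ ≤ (B * C * (n:ℝ) ^ α) ^ δ :=
          Real.rpow_le_rpow (hf0 n) ihn hδ0
        refine h1.trans ?_
        rw [Real.mul_rpow (by positivity) (by positivity),
          Real.mul_rpow (by positivity) (by positivity),
          Real.rpow_mul hnpos.le]
        have hc : C ^ δ ≤ C := by
          calc C ^ δ ≤ C ^ (1:ℝ) :=
            Real.rpow_le_rpow_of_exponent_le hC hδ1.le
          _ = C := Real.rpow_one C
        gcongr
      set X : ℝ := (n:ℝ) ^ (α * δ) with hX
      have e1 : C ≤ B ^ δ * C * X := by nlinarith [mul_pos hBδpos hCpos]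
      have e2 : B * C * X ≤ B * C * (α * X) := by
        nlinarith [mul_nonneg (mul_nonneg (mul_pos hBpos hCpos).le htαδ0)
          (sub_nonneg.mpr hα1)]
      have e3 : B * C * X = B ^ δ * C * X + b * (B ^ δ * C * X) := by
        linear_combination (C * X) * hBsplit
      have hfδb : b * f n ^ δ ≤ b * (B ^ δ * C * X) :=
        mul_le_mul_of_nonneg_left hfδ hb
      calc f (n + 1) ≤ C + f n + b * f n ^ δ := hrec n hn
      _ ≤ C + B * C * (n:ℝ) ^ α + b * (B ^ δ * C * X) := by linarith
      _ ≤ B * C * ((n:ℝ) ^ α + α * X) := by nlinarith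
      _ ≤ B * C * ((n:ℝ) + 1) ^ α :=
          mul_le_mul_of_nonneg_left hbern (by positivity)
      _ = B * C * ((n + 1 : ℕ):ℝ) ^ α := by push_cast; ring
end

section
/- Goldreich–Levin XOR decoding step: Let n ∈ ℕ, let s : Fin n → ZMod 2, let g : (Fin n → ZMod 2) → ZMod 2 be any function, and let α ≥ 0. Suppose that Pr_{r}[g(r) = Σ_j s j · r j] ≥ 3/4 + α, where r is uniformly distributed over (Fin n → ZMod 2) and the sum is the inner product over ZMod 2. Then for every coordinate j ∈ Fin n, Pr_{r}[g(r) + g(r + e_j) = s j] ≥ 1/2 + 2α, where e_j : Fin n → ZMod 2 is the j-th standard basis vector and addition of vectors and of values is in ZMod 2. -/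
open Finset

/-- Goldreich–Levin XOR decoding step. -/
theorem stmt_17 (n : ℕ) (s : Fin n → ZMod 2) (g : (Fin n → ZMod 2) → ZMod 2)
    (α : ℝ) (hα : 0 ≤ α)
    (h : 3 / 4 + α ≤
      ((Finset.univ.filter
          (fun r : Fin n → ZMod 2 => g r = ∑ j, s j * r j)).card : ℝ) / 2 ^ n) :
    ∀ j : Fin n, 1 / 2 + 2 * α ≤
      ((Finset.univ.filter
          (fun r : Fin n → ZMod 2 =>
            g r + g (r + fun i => if i = j then 1 else 0) = s j)).card : ℝ) / 2 ^ n := by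
  intro j
  set e : Fin n → ZMod 2 := fun i => if i = j then 1 else 0 with he
  set A := Finset.univ.filter (fun r : Fin n → ZMod 2 => g r = ∑ i, s i * r i) with hA
  set B := Finset.univ.filter
      (fun r : Fin n → ZMod 2 => g (r + e) = ∑ i, s i * (r + e) i) with hB
  set C := Finset.univ.filter
      (fun r : Fin n → ZMod 2 => g r + g (r + e) = s j) with hC
  have hchar : ∀ x : ZMod 2, x + x = 0 := by decide
  have hee : ∀ r : Fin n → ZMod 2, r + e + e = r := by
    intro r; funext i
    simp [Pi.add_apply, add_assoc, hchar (e i)]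
  have hse : ∑ i, s i * e i = s j := by
    simp [he, mul_ite, Finset.sum_ite_eq]
  -- card B = card A
  have hBA : B.card = A.card := by
    apply Finset.card_bij (fun r _ => r + e)
    · intro r hr
      simp only [hA, hB, Finset.mem_filter, Finset.mem_univ, true_and] at hr ⊢
      exact hr
    · intro r₁ h₁ r₂ h₂ hr
      have := congrArg (· + e) hr
      simpa [hee] using this
    · intro r hr
      refine ⟨r + e, ?_, hee r⟩
      simp only [hA, hB, Finset.mem_filter, Finset.mem_univ, true_and] at hr ⊢
      rw [hee]; exact hr
  -- A ∩ B ⊆ C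
  have hsub : A ∩ B ⊆ C := by
    intro r hr
    simp only [hA, hB, hC, Finset.mem_inter, Finset.mem_filter, Finset.mem_univ,
      true_and] at hr ⊢
    obtain ⟨h1, h2⟩ := hr
    rw [h1, h2]
    have : ∑ i, s i * (r + e) i = (∑ i, s i * r i) + ∑ i, s i * e i := by
      rw [← Finset.sum_add_distrib]
      congr 1; funext i; simp [Pi.add_apply, mul_add]
    rw [this, hse]
    rw [← add_assoc]
    rw [hchar, zero_add]
  have hcardint : A.card + B.card - Fintype.card (Fin n → ZMod 2) ≤ (A ∩ B).card := by
    have h1 : (A ∪ B).card ≤ Fintype.card (Fin n → ZMod 2) := by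
      simpa using Finset.card_le_card (Finset.subset_univ (A ∪ B))
    have h2 := Finset.card_inter_add_card_union A B
    omega
  have hcardF : Fintype.card (Fin n → ZMod 2) = 2 ^ n := by
    simp [ZMod.card]
  have hpow : (0:ℝ) < 2 ^ n := by positivity
  -- translate to reals
  have hCge : 2 * A.card - (2:ℝ) ^ n ≤ (C.card : ℝ) := by
    have h3 : (A ∩ B).card ≤ C.card := Finset.card_le_card hsub
    have := hcardint
    rw [hcardF, hBA] at this
    have h4 : 2 * A.card ≤ C.card + 2 ^ n := by omega
    have h5 : ((2 * A.card : ℕ) : ℝ) ≤ ((C.card + 2 ^ n : ℕ) : ℝ) := Nat.cast_le.mpr h4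
    push_cast at h5
    linarith
  rw [le_div_iff₀ hpow] at h ⊢
  nlinarith [h, hCge]
end

section
/- Induction basis of the OI hardness argument: Let m ≥ 1, let Z = Fin m × X, and let H be a probability mass function on Z whose marginal on the first coordinate is uniform: Σ_{x∈X} H(j, x) = 1/m for every j ∈ Fin m; let D_1 be the conditional distribution of x given first coordinate equal to the fixed index 1, i.e., D_1(x) = m · H(1, x). Let f₁ : X → {0,1}, and let p* : Z → [0,1] be a predictor with p*(1, x) = f₁(x) for all x ∈ X. Define the distinguisher A₁ : Z × Bool → Bool that accepts (j, x, o) if and only if j = 1 and the {0,1}-value of o equals f₁(x). Let pt : Z → [0,1] be a predictor. If |Pr_{z~H, o~Ber(p* z)}[A₁(z, o) = true] − Pr_{z~H, o~Ber(pt z)}[A₁(z, o) = true]| ≤ 1/(100m), then Pr_{x~D_1}[|pt(1, x) − f₁(x)| < 1/2] ≥ 0.98; that is, rounding pt(1,·) to the nearer of 0 and 1 computes f₁ correctly with probability at least 0.98 over x ~ D_1. -/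
open Finset

/-- Acceptance probability of the distinguisher `A₁` — which accepts `(z, o)` iff the first
coordinate of `z` is the fixed index and the `{0,1}`-value of `o` equals `f z.2` — when
`z ~ H` and `o ~ Ber(p z)`. -/
noncomputable def acceptA1 {X : Type*} [Fintype X] (m : ℕ) (hm : 0 < m)
    (H : Fin m × X → ℝ) (f : X → ℝ) (p : Fin m × X → ℝ) : ℝ :=
  ∑ z : Fin m × X,
    H z * (p z * (if z.1 = (⟨0, hm⟩ : Fin m) ∧ f z.2 = 1 then 1 else 0)
      + (1 - p z) * (if z.1 = (⟨0, hm⟩ : Fin m) ∧ f z.2 = 0 then 1 else 0))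

/-- Induction basis of the OI hardness argument: if `pt` is `1/(100m)`-outcome
indistinguishable from `p*` with respect to the distinguisher `A₁`, then rounding
`pt(⟨0⟩, ·)` computes `f₁` correctly with probability at least `0.98` over `x ~ D_1`,
where `D_1 x = m * H(⟨0⟩, x)`. -/
theorem stmt_19 {X : Type*} [Fintype X] [Nonempty X]
    (m : ℕ) (hm : 0 < m)
    (H : Fin m × X → ℝ) (hH0 : ∀ z, 0 ≤ H z) (hH1 : ∑ z, H z = 1)
    (hmarg : ∀ j : Fin m, ∑ x, H (j, x) = 1 / m)
    (f : X → ℝ) (hf : ∀ x, f x = 0 ∨ f x = 1)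
    (pstar : Fin m × X → ℝ) (hps : ∀ z, 0 ≤ pstar z ∧ pstar z ≤ 1)
    (hpsf : ∀ x, pstar (⟨0, hm⟩, x) = f x)
    (pt : Fin m × X → ℝ) (hpt : ∀ z, 0 ≤ pt z ∧ pt z ≤ 1)
    (hOI : |acceptA1 m hm H f pstar - acceptA1 m hm H f pt| ≤ 1 / (100 * m)) :
    0.98 ≤ ∑ x ∈ Finset.univ.filter (fun x => |pt (⟨0, hm⟩, x) - f x| < 1 / 2),
        (m : ℝ) * H (⟨0, hm⟩, x) := by
  have hmR : (0:ℝ) < m := by exact_mod_cast hm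
  set c : Fin m := ⟨0, hm⟩ with hc
  have key : ∀ p : Fin m × X → ℝ, acceptA1 m hm H f p
      = ∑ x, H (c, x) * (p (c, x) * (if f x = 1 then 1 else 0)
          + (1 - p (c, x)) * (if f x = 0 then 1 else 0)) := by
    intro p
    rw [acceptA1, Fintype.sum_prod_type]
    rw [Finset.sum_eq_single c]
    · simp [hc]
    · intro j _ hj
      apply Finset.sum_eq_zero
      intro x _
      simp [hj, ← hc]
    · intro h; exact absurd (Finset.mem_univ c) h
  have hstar : acceptA1 m hm H f pstar = ∑ x, H (c, x) := by
    rw [key]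
    apply Finset.sum_congr rfl
    intro x _
    rcases hf x with h0 | h1
    · norm_num [hpsf x, h0]
    · norm_num [hpsf x, h1]
  have hdiff : acceptA1 m hm H f pstar - acceptA1 m hm H f pt
      = ∑ x, H (c, x) * |pt (c, x) - f x| := by
    rw [hstar, key pt, ← Finset.sum_sub_distrib]
    apply Finset.sum_congr rfl
    intro x _
    rcases hf x with h0 | h1
    · rw [h0, sub_zero, abs_of_nonneg (hpt (c, x)).1]
      norm_num; ring
    · rw [h1, abs_of_nonpos (by linarith [(hpt (c, x)).2])]
      norm_num; ring
  have hbound : ∑ x, H (c, x) * |pt (c, x) - f x| ≤ 1 / (100 * m) := by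
    rw [← hdiff]; exact le_trans (le_abs_self _) hOI
  have hcomp : ∑ x ∈ Finset.univ.filter (fun x => ¬ |pt (c, x) - f x| < 1 / 2), H (c, x)
      ≤ 2 * (1 / (100 * m)) := by
    have h1 : ∑ x ∈ Finset.univ.filter (fun x => ¬ |pt (c, x) - f x| < 1 / 2), H (c, x)
        ≤ ∑ x ∈ Finset.univ.filter (fun x => ¬ |pt (c, x) - f x| < 1 / 2),
            2 * (H (c, x) * |pt (c, x) - f x|) := by
      apply Finset.sum_le_sum
      intro x hx
      have h2 : (1:ℝ) / 2 ≤ |pt (c, x) - f x| := not_lt.mp (Finset.mem_filter.mp hx).2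
      nlinarith [hH0 (c, x)]
    have h3 : ∑ x ∈ Finset.univ.filter (fun x => ¬ |pt (c, x) - f x| < 1 / 2),
            2 * (H (c, x) * |pt (c, x) - f x|)
        ≤ ∑ x, 2 * (H (c, x) * |pt (c, x) - f x|) := by
      apply Finset.sum_le_sum_of_subset_of_nonneg (Finset.filter_subset _ _)
      intro x _ _
      exact mul_nonneg (by norm_num) (mul_nonneg (hH0 _) (abs_nonneg _))
    have h4 : ∑ x, 2 * (H (c, x) * |pt (c, x) - f x|)
        = 2 * ∑ x, H (c, x) * |pt (c, x) - f x| := by rw [Finset.mul_sum]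
    linarith
  have hsplit : ∑ x ∈ Finset.univ.filter (fun x => |pt (c, x) - f x| < 1 / 2), H (c, x)
      + ∑ x ∈ Finset.univ.filter (fun x => ¬ |pt (c, x) - f x| < 1 / 2), H (c, x)
      = 1 / m := by
    rw [Finset.sum_filter_add_sum_filter_not]; exact hmarg c
  have hgoal : ∑ x ∈ Finset.univ.filter (fun x => |pt (c, x) - f x| < 1 / 2),
      (m : ℝ) * H (c, x)
      = (m : ℝ) * ∑ x ∈ Finset.univ.filter (fun x => |pt (c, x) - f x| < 1 / 2), H (c, x) := by
    rw [Finset.mul_sum]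
  rw [hgoal]
  have : (1:ℝ)/m - 2 * (1/(100*m)) = 0.98 / m := by field_simp; ring
  have h5 : 0.98 / m ≤ ∑ x ∈ Finset.univ.filter (fun x => |pt (c, x) - f x| < 1 / 2), H (c, x) := by
    linarith
  calc (0.98 : ℝ) = (m : ℝ) * (0.98 / m) := by field_simp
    _ ≤ _ := by
        apply mul_le_mul_of_nonneg_left h5 (le_of_lt hmR)
end
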